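/- Let E be a Banach space with a normalized 1-unconditional basis (𝐞_i), let 𝓕 be a combinatorial family, and let A ∈ 𝓕̄ (the closure of 𝓕 in {0,1}^ℕ). Then ‖Λ𝐱‖_{X_{𝓕,E}} = ‖𝐱‖_E for every 𝐱 ∈ E supported on A, and ‖x*‖_{X_{𝓕,E}^*} = ‖𝐱*‖_{E*} for every x* ∈ X_{𝓕,E}^* supported on A. -/

import Mathlib

open Filter Topology NormedSpace

noncomputable section

/-- A combinatorial family: a family of finite subsets of `ℕ` containing all
singletons and hereditary for inclusion. -/
def IsCombFamily (𝓕 : Set (Finset ℕ)) : Prop :=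
  (∀ n : ℕ, ({n} : Finset ℕ) ∈ 𝓕) ∧ ∀ F ∈ 𝓕, ∀ G : Finset ℕ, G ⊆ F → G ∈ 𝓕

/-- A family of finite subsets of `ℕ` is compact if it is closed in `{0,1}^ℕ`,
identifying sets with their characteristic functions. -/
def IsCompactFamily (𝓕 : Set (Finset ℕ)) : Prop :=
  IsClosed {f : ℕ → Bool | ∃ F ∈ 𝓕, ∀ n, f n = true ↔ n ∈ F}

/-- The closure of the family `𝓕` in `{0,1}^ℕ`: all sets every finite subset of
which belongs to `𝓕`. -/
def famClosure (𝓕 : Set (Finset ℕ)) : Set (Set ℕ) :=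
  {A | ∀ G : Finset ℕ, ↑G ⊆ A → G ∈ 𝓕}

/-- Maximal elements of a family. -/
def famMax (𝓕 : Set (Finset ℕ)) : Set (Finset ℕ) :=
  {F | F ∈ 𝓕 ∧ ∀ G ∈ 𝓕, F ⊆ G → F = G}

/-- A spreading family. -/
def IsSpreading (𝓕 : Set (Finset ℕ)) : Prop :=
  ∀ F ∈ 𝓕, ∀ σ : ℕ → ℕ, (∀ n ∈ F, n ≤ σ n) → Finset.image σ F ∈ 𝓕

/-- `X`, with distinguished sequence `e`, is (a realization of) the `p`-convexification
`X_{𝓕,p}` of the combinatorial Banach space associated with `𝓕`: the canonical vectors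
have dense linear span, and finitely supported vectors have the norm
`sup { (∑_{i∈F} |a i|^p)^{1/p} : F ∈ 𝓕 }`. -/
structure IsXFp (𝕜 : Type*) [RCLike 𝕜] (𝓕 : Set (Finset ℕ)) (p : ℝ)
    (X : Type*) [NormedAddCommGroup X] [NormedSpace 𝕜 X] (e : ℕ → X) : Prop where
  dense_span : Dense (Submodule.span 𝕜 (Set.range e) : Set X)
  norm_eq : ∀ a : ℕ →₀ 𝕜,
    ‖∑ i ∈ a.support, a i • e i‖ =
      sSup {r : ℝ | ∃ F ∈ 𝓕, r = (∑ i ∈ F, ‖a i‖ ^ p) ^ (1 / p)}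

/-- `(b, bs)` is a normalized 1-unconditional Schauder basis of `E` together with its
coordinate functionals. -/
structure IsNUBasis (𝕜 : Type*) [RCLike 𝕜] (E : Type*)
    [NormedAddCommGroup E] [NormedSpace 𝕜 E]
    (b : ℕ → E) (bs : ℕ → StrongDual 𝕜 E) : Prop where
  biortho : ∀ i j, bs i (b j) = if i = j then 1 else 0
  normalized : ∀ i, ‖b i‖ = 1
  expansion : ∀ x : E,
    Tendsto (fun N => ∑ i ∈ Finset.range N, bs i x • b i) atTop (nhds x)
  unconditional : ∀ a : ℕ →₀ 𝕜, ∀ ω : ℕ → 𝕜, (∀ i, ‖ω i‖ = 1) →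
    ‖∑ i ∈ a.support, ω i • a i • b i‖ = ‖∑ i ∈ a.support, a i • b i‖

/-- `X`, with distinguished sequence `e`, is (a realization of) `X_{𝓕,E}`. -/
structure IsXFE (𝕜 : Type*) [RCLike 𝕜] (𝓕 : Set (Finset ℕ))
    (E : Type*) [NormedAddCommGroup E] [NormedSpace 𝕜 E] (b : ℕ → E)
    (X : Type*) [NormedAddCommGroup X] [NormedSpace 𝕜 X] (e : ℕ → X) : Prop where
  dense_span : Dense (Submodule.span 𝕜 (Set.range e) : Set X)
  norm_eq : ∀ a : ℕ →₀ 𝕜,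
    ‖∑ i ∈ a.support, a i • e i‖ =
      sSup {r : ℝ | ∃ F ∈ 𝓕, r = ‖∑ i ∈ F, a i • b i‖}

/-- A normed space is strictly convex if its unit sphere contains no nontrivial
segments. -/
def IsStrictlyConvexSp (Y : Type*) [NormedAddCommGroup Y] : Prop :=
  ∀ u v : Y, ‖u‖ = 1 → ‖v‖ = 1 → u ≠ v → ‖u + v‖ < 2

/-- `x` is an extreme point of the closed unit ball of `Y`. -/
def IsExtremePtBall {Y : Type*} [NormedAddCommGroup Y] (x : Y) : Prop :=
  ‖x‖ ≤ 1 ∧ ∀ u v : Y, ‖u‖ ≤ 1 → ‖v‖ ≤ 1 → u + v = x + x → u = x ∧ v = x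

/-- `x` is an extreme point of the closed unit ball of the subspace `M`. -/
def IsExtremePtBallIn {𝕜 Y : Type*} [RCLike 𝕜] [NormedAddCommGroup Y] [NormedSpace 𝕜 Y]
    (M : Submodule 𝕜 Y) (x : Y) : Prop :=
  x ∈ M ∧ ‖x‖ ≤ 1 ∧
    ∀ u v : Y, u ∈ M → v ∈ M → ‖u‖ ≤ 1 → ‖v‖ ≤ 1 → u + v = x + x → u = x ∧ v = x

/-- The basis `b` is strictly 1-unconditional. -/
def StrictlyUnconditional (𝕜 : Type*) [RCLike 𝕜] {E : Type*}
    [NormedAddCommGroup E] [NormedSpace 𝕜 E] (b : ℕ → E) : Prop :=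
  ∀ a c : ℕ →₀ 𝕜, (∀ i, ‖a i‖ ≤ ‖c i‖) → (∃ i, ‖a i‖ < ‖c i‖) →
    ‖∑ i ∈ c.support, a i • b i‖ < ‖∑ i ∈ c.support, c i • b i‖

/-- The basis `b` is 1-symmetric: every permutation of `ℕ` induces a surjective
linear isometry of `E` permuting the basis vectors. -/
def IsSymmetricBasis (𝕜 : Type*) [RCLike 𝕜] {E : Type*}
    [NormedAddCommGroup E] [NormedSpace 𝕜 E] (b : ℕ → E) : Prop :=
  ∀ σ : Equiv.Perm ℕ, ∃ T : E ≃ₗᵢ[𝕜] E, ∀ i, T (b i) = b (σ i)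

/-- Condition (H): for `j ≠ k`, any linear isometric embedding of `span(bs j, bs k)`
into the dual of `E` sends `bs j` and `bs k` to functionals with disjoint supports. -/
def CondH (𝕜 : Type*) [RCLike 𝕜] {E : Type*} [NormedAddCommGroup E] [NormedSpace 𝕜 E]
    (b : ℕ → E) (bs : ℕ → StrongDual 𝕜 E) : Prop :=
  ∀ j k : ℕ, j ≠ k →
    ∀ T : ↥(Submodule.span 𝕜 {bs j, bs k}) →ₗᵢ[𝕜] StrongDual 𝕜 E,
      ∀ i : ℕ,
        T ⟨bs j, Submodule.subset_span (Set.mem_insert _ _)⟩ (b i) = 0 ∨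
        T ⟨bs k, Submodule.subset_span (Set.mem_insert_of_mem _ rfl)⟩ (b i) = 0

/-- `span(u,v)` is isometrically equal to `ℓ₂(2)`. -/
def SpanIsL2 (𝕜 : Type*) [RCLike 𝕜] {Y : Type*} [NormedAddCommGroup Y] [NormedSpace 𝕜 Y]
    (u v : Y) : Prop :=
  ∀ a c : 𝕜, ‖a • u + c • v‖ ^ 2 = ‖a‖ ^ 2 + ‖c‖ ^ 2

section Aux
variable {𝕜 : Type*} [RCLike 𝕜] {E : Type*} [NormedAddCommGroup E] [NormedSpace 𝕜 E]
  {b : ℕ → E} {bs : ℕ → StrongDual 𝕜 E}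

/-- Suppression estimate for a 1-unconditional basis. -/
lemma auxA (hE : IsNUBasis 𝕜 E b bs) (a : ℕ →₀ 𝕜) (F : Finset ℕ) :
    ‖∑ i ∈ F, a i • b i‖ ≤ ‖∑ i ∈ a.support, a i • b i‖ := by
  classical
  set s := a.support with hs
  have hred : ∑ i ∈ F, a i • b i = ∑ i ∈ s ∩ F, a i • b i := by
    refine (Finset.sum_subset Finset.inter_subset_right fun i hiF hni => ?_).symm
    have : a i = 0 := by
      by_contra h
      exact hni (Finset.mem_inter.2 ⟨Finsupp.mem_support_iff.2 h, hiF⟩)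
    simp [this]
  set ω : ℕ → 𝕜 := fun i => if i ∈ F then 1 else -1 with hω
  have hωn : ∀ i, ‖ω i‖ = 1 := by
    intro i; by_cases h : i ∈ F <;> simp [hω, h]
  have hx' : ‖∑ i ∈ s, ω i • a i • b i‖ = ‖∑ i ∈ s, a i • b i‖ :=
    hE.unconditional a ω hωn
  have hkey : (∑ i ∈ s, a i • b i) + ∑ i ∈ s, ω i • a i • b i
      = (2 : 𝕜) • ∑ i ∈ s ∩ F, a i • b i := by
    rw [← Finset.sum_add_distrib]
    have : ∀ i ∈ s, a i • b i + ω i • a i • b i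
        = if i ∈ F then (2 : 𝕜) • (a i • b i) else 0 := by
      intro i _
      by_cases h : i ∈ F
      · simp [hω, h, two_smul]
      · simp [hω, h]
    rw [Finset.sum_congr rfl this, ← Finset.sum_filter, Finset.filter_mem_eq_inter,
      Finset.smul_sum]
  have h2 : ‖(2 : 𝕜) • ∑ i ∈ s ∩ F, a i • b i‖ = 2 * ‖∑ i ∈ s ∩ F, a i • b i‖ := by
    rw [norm_smul]; norm_num
  have := norm_add_le (∑ i ∈ s, a i • b i) (∑ i ∈ s, ω i • a i • b i)
  rw [hkey, h2, hx'] at this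
  rw [hred]
  linarith

lemma indicator_sum {V : Type*} [AddCommMonoid V] [Module 𝕜 V]
    (t : Finset ℕ) (g : ℕ → 𝕜) (v : ℕ → V) :
    ∑ i ∈ (Finsupp.indicator t (fun i _ => g i)).support,
        (Finsupp.indicator t (fun i _ => g i)) i • v i = ∑ i ∈ t, g i • v i := by
  classical
  rw [Finset.sum_subset (Finsupp.support_indicator_subset _ _)]
  · exact Finset.sum_congr rfl fun i hi => by simp [Finsupp.indicator_apply, hi]
  · intro i _ hnot
    rw [Finsupp.notMem_support_iff.1 hnot, zero_smul]

lemma auxA' (hE : IsNUBasis 𝕜 E b bs) {t F : Finset ℕ} (hF : F ⊆ t) (g : ℕ → 𝕜) :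
    ‖∑ i ∈ F, g i • b i‖ ≤ ‖∑ i ∈ t, g i • b i‖ := by
  classical
  set a := Finsupp.indicator t (fun i _ => g i) with ha
  have h1 : ∑ i ∈ F, g i • b i = ∑ i ∈ F, a i • b i :=
    Finset.sum_congr rfl fun i hi => by simp [ha, Finsupp.indicator_apply, hF hi]
  rw [h1, ← indicator_sum t g b]
  exact auxA hE a F

end Aux
section AuxX
variable {𝕜 : Type*} [RCLike 𝕜] {E : Type*} [NormedAddCommGroup E] [NormedSpace 𝕜 E]
  {b : ℕ → E} {bs : ℕ → StrongDual 𝕜 E} {𝓕 : Set (Finset ℕ)}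
  {X : Type*} [NormedAddCommGroup X] [NormedSpace 𝕜 X] {e : ℕ → X}

lemma normX_bdd (hE : IsNUBasis 𝕜 E b bs) (a : ℕ →₀ 𝕜) :
    BddAbove {r : ℝ | ∃ F ∈ 𝓕, r = ‖∑ i ∈ F, a i • b i‖} := by
  refine ⟨‖∑ i ∈ a.support, a i • b i‖, ?_⟩
  rintro r ⟨F, hF, rfl⟩
  exact auxA hE a F

lemma normX_le (hE : IsNUBasis 𝕜 E b bs) (h𝓕 : IsCombFamily 𝓕)
    (hX : IsXFE 𝕜 𝓕 E b X e) (a : ℕ →₀ 𝕜) :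
    ‖∑ i ∈ a.support, a i • e i‖ ≤ ‖∑ i ∈ a.support, a i • b i‖ := by
  rw [hX.norm_eq]
  refine csSup_le ⟨_, ⟨{0}, h𝓕.1 0, rfl⟩⟩ ?_
  rintro r ⟨F, hF, rfl⟩
  exact auxA hE a F

lemma normX_eq (hE : IsNUBasis 𝕜 E b bs) (h𝓕 : IsCombFamily 𝓕)
    (hX : IsXFE 𝕜 𝓕 E b X e) {A : Set ℕ} (hA : A ∈ famClosure 𝓕)
    (a : ℕ →₀ 𝕜) (hsupp : ↑a.support ⊆ A) :
    ‖∑ i ∈ a.support, a i • e i‖ = ‖∑ i ∈ a.support, a i • b i‖ := by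
  refine le_antisymm (normX_le hE h𝓕 hX a) ?_
  rw [hX.norm_eq]
  exact le_csSup (normX_bdd hE a) ⟨a.support, hA a.support hsupp, rfl⟩

/-- The norm of finite sums: inequality version. -/
lemma finsum_norm_le (hE : IsNUBasis 𝕜 E b bs) (h𝓕 : IsCombFamily 𝓕)
    (hX : IsXFE 𝕜 𝓕 E b X e) (t : Finset ℕ) (g : ℕ → 𝕜) :
    ‖∑ i ∈ t, g i • e i‖ ≤ ‖∑ i ∈ t, g i • b i‖ := by
  classical
  rw [← indicator_sum t g e, ← indicator_sum t g b]
  exact normX_le hE h𝓕 hX _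

/-- The norm of finite sums supported on `A`: equality version. -/
lemma finsum_norm_eq (hE : IsNUBasis 𝕜 E b bs) (h𝓕 : IsCombFamily 𝓕)
    (hX : IsXFE 𝕜 𝓕 E b X e) {A : Set ℕ} (hA : A ∈ famClosure 𝓕)
    (t : Finset ℕ) (g : ℕ → 𝕜) (hg : ∀ i ∈ t, i ∉ A → g i = 0) :
    ‖∑ i ∈ t, g i • e i‖ = ‖∑ i ∈ t, g i • b i‖ := by
  classical
  rw [← indicator_sum t g e, ← indicator_sum t g b]
  refine normX_eq hE h𝓕 hX hA _ ?_
  intro i hi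
  have hi' := Finset.mem_coe.1 hi
  have hit := Finsupp.support_indicator_subset _ _ hi'
  have hne := Finsupp.mem_support_iff.1 hi'
  by_contra hiA
  exact hne (by simp [Finsupp.indicator_apply, hit, hg i hit hiA])

lemma normX_filter_le (hE : IsNUBasis 𝕜 E b bs) (h𝓕 : IsCombFamily 𝓕)
    (hX : IsXFE 𝕜 𝓕 E b X e) (A : Set ℕ) (c : ℕ →₀ 𝕜)
    [DecidablePred (· ∈ A)] :
    ‖∑ i ∈ (c.filter (· ∈ A)).support, (c.filter (· ∈ A)) i • e i‖ ≤
      ‖∑ i ∈ c.support, c i • e i‖ := by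
  classical
  rw [hX.norm_eq, hX.norm_eq]
  refine csSup_le_csSup (normX_bdd hE c) ⟨_, ⟨{0}, h𝓕.1 0, rfl⟩⟩ ?_
  rintro r ⟨F, hF, rfl⟩
  refine ⟨F.filter (· ∈ A), h𝓕.2 F hF _ (Finset.filter_subset _ _), ?_⟩
  rw [Finset.sum_filter]
  congr 1
  exact Finset.sum_congr rfl fun i _ => by
    by_cases h : i ∈ A <;> simp [Finsupp.filter_apply, h]

lemma partial_norm_le (hE : IsNUBasis 𝕜 E b bs) [CompleteSpace E] (x : E) (N : ℕ) :
    ‖∑ i ∈ Finset.range N, bs i x • b i‖ ≤ ‖x‖ := by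
  refine ge_of_tendsto (hE.expansion x).norm ?_
  filter_upwards [eventually_ge_atTop N] with M hM
  exact auxA' hE (Finset.range_subset_range.2 hM) _
end AuxX
theorem norm_eq_of_supported_on_closure
    {𝕜 : Type*} [RCLike 𝕜]
    (E : Type*) [NormedAddCommGroup E] [NormedSpace 𝕜 E] [CompleteSpace E]
    (b : ℕ → E) (bs : ℕ → StrongDual 𝕜 E) (hE : IsNUBasis 𝕜 E b bs)
    (𝓕 : Set (Finset ℕ)) (h𝓕 : IsCombFamily 𝓕)
    (X : Type*) [NormedAddCommGroup X] [NormedSpace 𝕜 X] [CompleteSpace X]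
    (e : ℕ → X) (hX : IsXFE 𝕜 𝓕 E b X e)
    (eStar : ℕ → StrongDual 𝕜 X)
    (heStar : ∀ i j, eStar i (e j) = if i = j then (1 : 𝕜) else 0)
    (A : Set ℕ) (hA : A ∈ famClosure 𝓕) :
    (∀ x : E, (∀ i ∉ A, bs i x = 0) →
      ∃ y : X,
        Filter.Tendsto (fun N => ∑ i ∈ Finset.range N, bs i x • e i)
          Filter.atTop (nhds y) ∧ ‖y‖ = ‖x‖) ∧
    (∀ xs : StrongDual 𝕜 X, (∀ i ∉ A, xs (e i) = 0) →
      ∃ Xs : StrongDual 𝕜 E, (∀ i, Xs (b i) = xs (e i)) ∧ ‖xs‖ = ‖Xs‖) := by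
  classical
  -- distance comparison between partial sums in X and in E
  have key : ∀ (x : E) (M N : ℕ), M ≤ N →
      ‖(∑ i ∈ Finset.range N, bs i x • e i) - ∑ i ∈ Finset.range M, bs i x • e i‖ ≤
      ‖(∑ i ∈ Finset.range N, bs i x • b i) - ∑ i ∈ Finset.range M, bs i x • b i‖ := by
    intro x M N h
    rw [← Finset.sum_Ico_eq_sub _ h, ← Finset.sum_Ico_eq_sub _ h]
    exact finsum_norm_le hE h𝓕 hX _ _
  have hle : ∀ (x : E) (M N : ℕ),
      dist (∑ i ∈ Finset.range N, bs i x • e i) (∑ i ∈ Finset.range M, bs i x • e i) ≤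
      dist (∑ i ∈ Finset.range N, bs i x • b i) (∑ i ∈ Finset.range M, bs i x • b i) := by
    intro x M N
    rcases le_total M N with h | h
    · rw [dist_eq_norm, dist_eq_norm]; exact key x M N h
    · rw [dist_comm, dist_comm (∑ i ∈ Finset.range N, bs i x • b i),
        dist_eq_norm, dist_eq_norm]
      exact key x N M h
  have hSCauchy : ∀ x : E, CauchySeq (fun N => ∑ i ∈ Finset.range N, bs i x • e i) := by
    intro x
    rw [Metric.cauchySeq_iff]
    intro ε hε
    obtain ⟨N0, hN0⟩ := Metric.cauchySeq_iff.1 (hE.expansion x).cauchySeq ε hε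
    exact ⟨N0, fun m hm n hn => lt_of_le_of_lt (hle x n m) (hN0 m hm n hn)⟩
  have hΛ : ∀ x : E, ∃ y : X,
      Tendsto (fun N => ∑ i ∈ Finset.range N, bs i x • e i) atTop (𝓝 y) :=
    fun x => cauchySeq_tendsto_of_complete (hSCauchy x)
  constructor
  · -- Part 1
    intro x hx
    obtain ⟨y, hy⟩ := hΛ x
    refine ⟨y, hy, ?_⟩
    have hnorm : ∀ N, ‖∑ i ∈ Finset.range N, bs i x • e i‖ =
        ‖∑ i ∈ Finset.range N, bs i x • b i‖ := fun N =>
      finsum_norm_eq hE h𝓕 hX hA (Finset.range N) _ (fun i _ hiA => hx i hiA)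
    exact tendsto_nhds_unique hy.norm
      ((hE.expansion x).norm.congr fun N => (hnorm N).symm)
  · -- Part 2
    intro xs hxs
    choose Lam hLam using hΛ
    have hg : ∀ x : E, Tendsto (fun N => xs (∑ i ∈ Finset.range N, bs i x • e i))
        atTop (𝓝 (xs (Lam x))) :=
      fun x => (xs.continuous.tendsto _).comp (hLam x)
    have hSadd : ∀ (x y : E) (N : ℕ),
        ∑ i ∈ Finset.range N, bs i (x + y) • e i =
        (∑ i ∈ Finset.range N, bs i x • e i) + ∑ i ∈ Finset.range N, bs i y • e i := by
      intro x y N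
      rw [← Finset.sum_add_distrib]
      exact Finset.sum_congr rfl fun i _ => by rw [map_add, add_smul]
    have hSsmul : ∀ (c : 𝕜) (x : E) (N : ℕ),
        ∑ i ∈ Finset.range N, bs i (c • x) • e i =
        c • ∑ i ∈ Finset.range N, bs i x • e i := by
      intro c x N
      rw [Finset.smul_sum]
      exact Finset.sum_congr rfl fun i _ => by rw [map_smul, smul_assoc]
    have gadd : ∀ x y : E, xs (Lam (x + y)) = xs (Lam x) + xs (Lam y) := by
      intro x y
      refine tendsto_nhds_unique (hg (x + y)) (((hg x).add (hg y)).congr fun N => ?_)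
      rw [hSadd x y N, map_add]
    have gsmul : ∀ (c : 𝕜) (x : E), xs (Lam (c • x)) = c • xs (Lam x) := by
      intro c x
      refine tendsto_nhds_unique (hg (c • x)) (((hg x).const_smul c).congr fun N => ?_)
      rw [hSsmul c x N, map_smul]
    have hbound : ∀ x : E, ‖xs (Lam x)‖ ≤ ‖xs‖ * ‖x‖ := by
      intro x
      refine le_of_tendsto (hg x).norm ?_
      filter_upwards with N
      calc ‖xs (∑ i ∈ Finset.range N, bs i x • e i)‖
          ≤ ‖xs‖ * ‖∑ i ∈ Finset.range N, bs i x • e i‖ := xs.le_opNorm _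
        _ ≤ ‖xs‖ * ‖x‖ := by
            refine mul_le_mul_of_nonneg_left ?_ (norm_nonneg xs)
            exact (finsum_norm_le hE h𝓕 hX _ _).trans (partial_norm_le hE x N)
    set Xs : StrongDual 𝕜 E := LinearMap.mkContinuous
      { toFun := fun x => xs (Lam x)
        map_add' := gadd
        map_smul' := fun c x => by simpa using gsmul c x } ‖xs‖ hbound with hXsdef
    have hXsapp : ∀ x : E, Xs x = xs (Lam x) := fun x => rfl
    have hXsb : ∀ j : ℕ, Xs (b j) = xs (e j) := by
      intro j
      refine tendsto_nhds_unique (hg (b j)) (tendsto_const_nhds.congr' ?_)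
      filter_upwards [eventually_gt_atTop j] with N hN
      have : ∑ i ∈ Finset.range N, bs i (b j) • e i = e j := by
        rw [Finset.sum_congr rfl fun i _ => by rw [hE.biortho i j]]
        simp [ite_smul, Finset.sum_ite_eq', Finset.mem_range, hN]
      rw [this]
    refine ⟨Xs, hXsb, le_antisymm ?_ (LinearMap.mkContinuous_norm_le _ (norm_nonneg xs) _)⟩
    -- ‖xs‖ ≤ ‖Xs‖
    refine ContinuousLinearMap.opNorm_le_bound _ (norm_nonneg Xs) fun z => ?_
    have hclosed : IsClosed {z : X | ‖xs z‖ ≤ ‖Xs‖ * ‖z‖} :=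
      isClosed_le (continuous_norm.comp xs.continuous) (continuous_const.mul continuous_norm)
    have hsub : (Submodule.span 𝕜 (Set.range e) : Set X) ⊆ {z : X | ‖xs z‖ ≤ ‖Xs‖ * ‖z‖} := by
      intro z hz
      obtain ⟨c, rfl⟩ := Finsupp.mem_span_range_iff_exists_finsupp.1 hz
      rw [Finsupp.sum]
      set c' : ℕ →₀ 𝕜 := c.filter (· ∈ A) with hc'
      have hsuppc' : ↑c'.support ⊆ A := by
        intro i hi
        have hi' : ¬ c i = 0 ∧ i ∈ A := by
          simpa [hc', Finsupp.support_filter] using hi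
        exact hi'.2
      have hRHS : ∑ i ∈ c'.support, c' i • Xs (b i) =
          ∑ i ∈ c.support.filter (· ∈ A), c i • xs (e i) := by
        rw [hc', Finsupp.support_filter]
        refine Finset.sum_congr rfl fun i hi => ?_
        obtain ⟨his, hiA⟩ := Finset.mem_filter.1 hi
        rw [hXsb, Finsupp.filter_apply_pos _ _ hiA]
      have hLHS : ∑ i ∈ c.support, c i • xs (e i) =
          ∑ i ∈ c.support.filter (· ∈ A), c i • xs (e i) := by
        refine (Finset.sum_subset (Finset.filter_subset _ _) fun i hi hni => ?_).symm
        have hiA : i ∉ A := fun h => hni (Finset.mem_filter.2 ⟨hi, h⟩)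
        rw [hxs i hiA, smul_zero]
      have hval : xs (∑ i ∈ c.support, c i • e i) = Xs (∑ i ∈ c'.support, c' i • b i) := by
        rw [map_sum, map_sum]
        simp only [map_smul]
        rw [hLHS, ← hRHS]
      have hw : ‖∑ i ∈ c'.support, c' i • b i‖ = ‖∑ i ∈ c'.support, c' i • e i‖ :=
        (normX_eq hE h𝓕 hX hA c' hsuppc').symm
      calc ‖xs (∑ i ∈ c.support, c i • e i)‖
          = ‖Xs (∑ i ∈ c'.support, c' i • b i)‖ := by rw [hval]
        _ ≤ ‖Xs‖ * ‖∑ i ∈ c'.support, c' i • b i‖ := Xs.le_opNorm _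
        _ = ‖Xs‖ * ‖∑ i ∈ c'.support, c' i • e i‖ := by rw [hw]
        _ ≤ ‖Xs‖ * ‖∑ i ∈ c.support, c i • e i‖ := by
            refine mul_le_mul_of_nonneg_left ?_ (norm_nonneg Xs)
            exact normX_filter_le hE h𝓕 hX A c
    exact hclosed.closure_subset_iff.2 hsub (by rw [hX.dense_span.closure_eq]; trivial)
end
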